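/- Let b̄, ḅ > 0 and T(x) = (1/2)·ln((b̄·x + b̄·ḅ)/(b̄·ḅ - ḅ·x)) for x ∈ (-ḅ, b̄). If |T(x)| ≤ σ̄ for some σ̄ > 0, then -ḅ·(b̄(1 - exp(-2σ̄)))/(ḅ·exp(-2σ̄) + b̄) ≤ x ≤ b̄·(ḅ(exp(2σ̄) - 1))/(ḅ·exp(2σ̄) + b̄), and in particular x lies in a compact subset strictly inside (-ḅ, b̄). -/
import Mathlib


theorem stmt_8 (bbar blo : ℝ) (hbbar : 0 < bbar) (hblo : 0 < blo)
    (T : ℝ → ℝ)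
    (hT : ∀ x, T x = (1 / 2) * Real.log ((bbar * x + bbar * blo) / (bbar * blo - blo * x)))
    (σbar : ℝ) (hσbar : 0 < σbar)
    (x : ℝ) (hx : x ∈ Set.Ioo (-blo) bbar) (hTx : |T x| ≤ σbar) :
    (-blo * (bbar * (1 - Real.exp (-2 * σbar))) / (blo * Real.exp (-2 * σbar) + bbar) ≤ x ∧
      x ≤ bbar * (blo * (Real.exp (2 * σbar) - 1)) / (blo * Real.exp (2 * σbar) + bbar)) ∧
    -blo < -blo * (bbar * (1 - Real.exp (-2 * σbar))) / (blo * Real.exp (-2 * σbar) + bbar) ∧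
    bbar * (blo * (Real.exp (2 * σbar) - 1)) / (blo * Real.exp (2 * σbar) + bbar) < bbar := by
  obtain ⟨hx1, hx2⟩ := hx
  set e := Real.exp (-2 * σbar) with he
  set E := Real.exp (2 * σbar) with hE
  have hepos : 0 < e := Real.exp_pos _
  have hEpos : 0 < E := Real.exp_pos _
  have hnum : 0 < bbar * x + bbar * blo := by nlinarith
  have hden : 0 < bbar * blo - blo * x := by nlinarith
  have hr : 0 < (bbar * x + bbar * blo) / (bbar * blo - blo * x) := div_pos hnum hden
  have habs := abs_le.mp hTx
  have hlog1 : Real.log ((bbar * x + bbar * blo) / (bbar * blo - blo * x)) ≤ 2 * σbar := by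
    have := habs.2; rw [hT x] at this; linarith
  have hlog2 : -2 * σbar ≤ Real.log ((bbar * x + bbar * blo) / (bbar * blo - blo * x)) := by
    have := habs.1; rw [hT x] at this; linarith
  have hrE : (bbar * x + bbar * blo) / (bbar * blo - blo * x) ≤ E :=
    (Real.log_le_iff_le_exp hr).mp hlog1
  have hre : e ≤ (bbar * x + bbar * blo) / (bbar * blo - blo * x) :=
    (Real.le_log_iff_exp_le hr).mp hlog2
  have h1 : bbar * x + bbar * blo ≤ E * (bbar * blo - blo * x) := by
    have := (div_le_iff₀ hden).mp hrE; linarith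
  have h2 : e * (bbar * blo - blo * x) ≤ bbar * x + bbar * blo := by
    have := (le_div_iff₀ hden).mp hre; linarith
  have hdE : 0 < blo * E + bbar := by positivity
  have hde : 0 < blo * e + bbar := by positivity
  refine ⟨⟨?_, ?_⟩, ?_, ?_⟩
  · rw [div_le_iff₀ hde]; nlinarith
  · rw [le_div_iff₀ hdE]; nlinarith
  · rw [lt_div_iff₀ hde]; nlinarith [mul_pos (mul_pos hblo hepos) (add_pos hblo hbbar)]
  · rw [div_lt_iff₀ hdE]; nlinarith
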